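/- Let v ≠ 0 and u₁, u₂, T₁, T₂, δx, δy be real numbers satisfying δx = T₁(u₁ + T₁/2) + T₂(u₂ + T₂/2), δy = v·(T₁ + T₂), and u₂ − u₁ = T₁ − T₂. Then δx = δy·(u₁ + u₂)/(2v) + ( (δy/v)² − (u₂ − u₁)² )/4. Moreover, (δy/v)² − (u₂ − u₁)² = 0 if and only if T₁ = 0 or T₂ = 0. -/

import Mathlib

/-- Kinematics of a horizontal bang-bang trajectory: if `v ≠ 0`,
`δx = T₁(u₁ + T₁/2) + T₂(u₂ + T₂/2)`, `δy = v(T₁ + T₂)`, and `u₂ − u₁ = T₁ − T₂`,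
then `δx = δy(u₁+u₂)/(2v) + ((δy/v)² − (u₂−u₁)²)/4`, and
`(δy/v)² − (u₂−u₁)² = 0` iff `T₁ = 0` or `T₂ = 0`. -/
theorem stmt_19 (v u₁ u₂ T₁ T₂ δx δy : ℝ) (hv : v ≠ 0)
    (hx : δx = T₁ * (u₁ + T₁ / 2) + T₂ * (u₂ + T₂ / 2))
    (hy : δy = v * (T₁ + T₂))
    (hu : u₂ - u₁ = T₁ - T₂) :
    δx = δy * (u₁ + u₂) / (2 * v) + ((δy / v) ^ 2 - (u₂ - u₁) ^ 2) / 4 ∧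
    ((δy / v) ^ 2 - (u₂ - u₁) ^ 2 = 0 ↔ T₁ = 0 ∨ T₂ = 0) := by
  have hdy : δy / v = T₁ + T₂ := by field_simp [hy]; exact hy
  constructor
  · have h2 : u₂ = u₁ + T₁ - T₂ := by linarith
    rw [hdy, hu, hx, hy, h2]
    field_simp
    ring
  · rw [hdy, hu]
    constructor
    · intro h
      have : (4:ℝ) * T₁ * T₂ = 0 := by nlinarith
      rcases mul_eq_zero.1 this with h' | h'
      · rcases mul_eq_zero.1 h' with h'' | h''
        · exact absurd h'' (by norm_num)
        · exact Or.inl h''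
      · exact Or.inr h'
    · rintro (h | h) <;> subst h <;> ring
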